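/- Let H₁ ≤ S_n, H₂ ≤ S_d, G = H₁ × H₂ acting on ℝ^{n×d} by (h₁,h₂)·X = P(h₁) X P(h₂)ᵀ. If {L¹_i}_{i=1}^{E(H₁)} and {L²_j}_{j=1}^{E(H₂)} are bases for the spaces of H₁-equivariant and H₂-equivariant linear endomorphisms respectively, then the maps T_{i,j}(X) = L¹_i X (L²_j)ᵀ form a basis for the space of linear G-equivariant maps ℝ^{n×d} → ℝ^{n×d}. -/

import Mathlib

/-- The submodule of linear endomorphisms of `α → ℝ` that are equivariant with respect to the
permutation action of a subgroup `G` of the symmetric group, acting by `(g • x) i = x (g⁻¹ i)`. -/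
noncomputable def equivSubmodule {α : Type*} [Fintype α] [DecidableEq α]
    (G : Subgroup (Equiv.Perm α)) :
    Submodule ℝ ((α → ℝ) →ₗ[ℝ] (α → ℝ)) where
  carrier := {L | ∀ g ∈ G, ∀ x : α → ℝ, (L fun i => x (g⁻¹ i)) = fun i => L x (g⁻¹ i)}
  add_mem' := by
    intro L M hL hM g hg x
    simp only [LinearMap.add_apply, hL g hg x, hM g hg x]
    rfl
  zero_mem' := by intro g hg x; simp; rfl
  smul_mem' := by
    intro c L hL g hg x
    simp only [LinearMap.smul_apply, hL g hg x]
    rfl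

/-- The group homomorphism `Perm α × Perm β →* Perm (α × β)`, `(p, q) ↦ p × q`. -/
def permProdHom (α β : Type*) : Equiv.Perm α × Equiv.Perm β →* Equiv.Perm (α × β) where
  toFun p := Equiv.prodCongr p.1 p.2
  map_one' := by ext p <;> rfl
  map_mul' p q := by ext x <;> rfl

/-- `T_{L₁,L₂}(X) = L₁ X L₂ᵀ` : the Kronecker-product operator on `ℝ^{n×d}`, applying `L₂`
to each row of `X` and `L₁` to each column. -/
noncomputable def Tmap {n d : ℕ} (L₁ : (Fin n → ℝ) →ₗ[ℝ] (Fin n → ℝ))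
    (L₂ : (Fin d → ℝ) →ₗ[ℝ] (Fin d → ℝ)) :
    (Fin n × Fin d → ℝ) →ₗ[ℝ] (Fin n × Fin d → ℝ) where
  toFun X p := L₁ (fun k => L₂ (fun l => X (k, l)) p.2) p.1
  map_add' X Y := by
    funext p
    have h2 : (fun k => L₂ (fun l => (X + Y) (k, l)) p.2) =
        (fun k => L₂ (fun l => X (k, l)) p.2) + fun k => L₂ (fun l => Y (k, l)) p.2 := by
      funext k
      have h1 : (fun l => (X + Y) (k, l)) = (fun l => X (k, l)) + fun l => Y (k, l) := rfl
      rw [h1, map_add]; rfl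
    show L₁ _ p.1 = _
    rw [h2, map_add]; rfl
  map_smul' c X := by
    funext p
    have h2 : (fun k => L₂ (fun l => (c • X) (k, l)) p.2) =
        c • fun k => L₂ (fun l => X (k, l)) p.2 := by
      funext k
      have h1 : (fun l => (c • X) (k, l)) = c • fun l => X (k, l) := rfl
      rw [h1, map_smul]; rfl
    show L₁ _ p.1 = _
    rw [h2, map_smul]; rfl


section Aux

theorem mem_equivSubmodule {α : Type*} [Fintype α] [DecidableEq α]
    (G : Subgroup (Equiv.Perm α)) (L : (α → ℝ) →ₗ[ℝ] (α → ℝ)) :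
    L ∈ equivSubmodule G ↔ ∀ g ∈ G, ∀ x : α → ℝ,
      (L fun i => x (g⁻¹ i)) = fun i => L x (g⁻¹ i) := Iff.rfl

variable {n d : ℕ}

theorem permProdHom_apply (a : Equiv.Perm (Fin n)) (b : Equiv.Perm (Fin d)) (p : Fin n × Fin d) :
    permProdHom (Fin n) (Fin d) (a, b) p = (a p.1, b p.2) := rfl

theorem permProdHom_inv_apply (a : Equiv.Perm (Fin n)) (b : Equiv.Perm (Fin d))
    (p : Fin n × Fin d) :
    (permProdHom (Fin n) (Fin d) (a, b))⁻¹ p = (a⁻¹ p.1, b⁻¹ p.2) := by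
  rw [← map_inv]; rfl

theorem Tmap_apply (L₁ : (Fin n → ℝ) →ₗ[ℝ] (Fin n → ℝ)) (L₂ : (Fin d → ℝ) →ₗ[ℝ] (Fin d → ℝ))
    (X : Fin n × Fin d → ℝ) (p : Fin n × Fin d) :
    Tmap L₁ L₂ X p = L₁ (fun k => L₂ (fun m => X (k, m)) p.2) p.1 := rfl

/-- Insert a vector as the `j`-th column. -/
noncomputable def insL (j : Fin d) : (Fin n → ℝ) →ₗ[ℝ] (Fin n × Fin d → ℝ) where
  toFun v p := if p.2 = j then v p.1 else 0
  map_add' v w := by funext p; by_cases h : p.2 = j <;> simp [h]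
  map_smul' c v := by funext p; by_cases h : p.2 = j <;> simp [h]

theorem insL_apply (j : Fin d) (v : Fin n → ℝ) (p : Fin n × Fin d) :
    insL j v p = if p.2 = j then v p.1 else 0 := rfl

/-- `Sop T j l v i = T (insL j v) (i, l)`. -/
noncomputable def Sop (T : (Fin n × Fin d → ℝ) →ₗ[ℝ] (Fin n × Fin d → ℝ)) (j l : Fin d) :
    (Fin n → ℝ) →ₗ[ℝ] (Fin n → ℝ) :=
  (LinearMap.funLeft ℝ ℝ fun i => (i, l)).comp (T.comp (insL j))

theorem Sop_apply (T : (Fin n × Fin d → ℝ) →ₗ[ℝ] (Fin n × Fin d → ℝ)) (j l : Fin d)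
    (v : Fin n → ℝ) (i : Fin n) : Sop T j l v i = T (insL j v) (i, l) := rfl

theorem reconstruction (T : (Fin n × Fin d → ℝ) →ₗ[ℝ] (Fin n × Fin d → ℝ))
    (X : Fin n × Fin d → ℝ) (i : Fin n) (l : Fin d) :
    T X (i, l) = ∑ j, Sop T j l (fun k => X (k, j)) i := by
  have hX : X = ∑ j, insL (n := n) j (fun k => X (k, j)) := by
    funext q
    rw [Finset.sum_apply]
    simp only [insL_apply]
    rw [Finset.sum_ite_eq Finset.univ q.2 (fun j => X (q.1, j))]
    simp
  conv_lhs => rw [hX]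
  rw [map_sum, Finset.sum_apply]
  exact Finset.sum_congr rfl fun j _ => rfl

end Aux

section Aux2

variable {n d : ℕ} {H₁ : Subgroup (Equiv.Perm (Fin n))} {H₂ : Subgroup (Equiv.Perm (Fin d))}

theorem Sop_mem {T : (Fin n × Fin d → ℝ) →ₗ[ℝ] (Fin n × Fin d → ℝ)}
    (hT : T ∈ equivSubmodule (Subgroup.map (permProdHom (Fin n) (Fin d)) (H₁.prod H₂)))
    (j l : Fin d) : Sop T j l ∈ equivSubmodule H₁ := by
  rw [mem_equivSubmodule] at hT ⊢
  intro h₁ hh₁ v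
  have hg : permProdHom (Fin n) (Fin d) (h₁, 1)
      ∈ Subgroup.map (permProdHom (Fin n) (Fin d)) (H₁.prod H₂) :=
    Subgroup.mem_map.2 ⟨(h₁, 1), Subgroup.mem_prod.2 ⟨hh₁, one_mem _⟩, rfl⟩
  have key := hT _ hg (insL j v)
  have h1 : (fun p : Fin n × Fin d => insL j v ((permProdHom (Fin n) (Fin d) (h₁, 1))⁻¹ p))
      = insL j fun k => v (h₁⁻¹ k) := by
    funext p
    rw [permProdHom_inv_apply]
    simp [insL_apply]
  funext i
  show T (insL j fun k => v (h₁⁻¹ k)) (i, l) = T (insL j v) (h₁⁻¹ i, l)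
  rw [← h1, key]
  simp [permProdHom_inv_apply]

theorem Sop_perm {T : (Fin n × Fin d → ℝ) →ₗ[ℝ] (Fin n × Fin d → ℝ)}
    (hT : T ∈ equivSubmodule (Subgroup.map (permProdHom (Fin n) (Fin d)) (H₁.prod H₂)))
    {h₂ : Equiv.Perm (Fin d)} (hh₂ : h₂ ∈ H₂) (j l : Fin d) :
    Sop T (h₂ j) l = Sop T j (h₂⁻¹ l) := by
  rw [mem_equivSubmodule] at hT
  refine LinearMap.ext fun v => funext fun i => ?_
  have hg : permProdHom (Fin n) (Fin d) (1, h₂)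
      ∈ Subgroup.map (permProdHom (Fin n) (Fin d)) (H₁.prod H₂) :=
    Subgroup.mem_map.2 ⟨(1, h₂), Subgroup.mem_prod.2 ⟨one_mem _, hh₂⟩, rfl⟩
  have key := hT _ hg (insL j v)
  have h1 : (fun p : Fin n × Fin d => insL j v ((permProdHom (Fin n) (Fin d) (1, h₂))⁻¹ p))
      = insL (h₂ j) v := by
    funext p
    rw [permProdHom_inv_apply]
    simp only [insL_apply, inv_one, Equiv.Perm.coe_one, id_eq]
    have hiff : (h₂⁻¹ p.2 = j) ↔ (p.2 = h₂ j) := by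
      constructor
      · intro h; rw [← h, Equiv.Perm.inv_def, Equiv.apply_symm_apply]
      · intro h; rw [h, Equiv.Perm.inv_def, Equiv.symm_apply_apply]
    simp only [hiff]
  show T (insL (h₂ j) v) (i, l) = T (insL j v) (i, h₂⁻¹ l)
  rw [← h1, key]
  simp [permProdHom_inv_apply]

theorem Tmap_mem {L₁ : (Fin n → ℝ) →ₗ[ℝ] (Fin n → ℝ)} {L₂ : (Fin d → ℝ) →ₗ[ℝ] (Fin d → ℝ)}
    (h₁ : L₁ ∈ equivSubmodule H₁) (h₂ : L₂ ∈ equivSubmodule H₂) :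
    Tmap L₁ L₂ ∈ equivSubmodule (Subgroup.map (permProdHom (Fin n) (Fin d)) (H₁.prod H₂)) := by
  rw [mem_equivSubmodule] at h₁ h₂ ⊢
  intro g hg X
  rw [Subgroup.mem_map] at hg
  obtain ⟨⟨a, b⟩, hab, rfl⟩ := hg
  rw [Subgroup.mem_prod] at hab
  have ha := h₁ a hab.1
  have hb := h₂ b hab.2
  funext p
  calc (Tmap L₁ L₂ fun q => X ((permProdHom (Fin n) (Fin d) (a, b))⁻¹ q)) p
      = L₁ (fun k => L₂ (fun m => X (a⁻¹ k, b⁻¹ m)) p.2) p.1 := by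
        rw [Tmap_apply]; simp only [permProdHom_inv_apply]
    _ = L₁ (fun k => L₂ (fun m => X (a⁻¹ k, m)) (b⁻¹ p.2)) p.1 := by
        have h : (fun k => L₂ (fun m => X (a⁻¹ k, b⁻¹ m)) p.2)
            = fun k => L₂ (fun m => X (a⁻¹ k, m)) (b⁻¹ p.2) :=
          funext fun k => congrFun (hb fun m => X (a⁻¹ k, m)) p.2
        rw [h]
    _ = L₁ (fun k => L₂ (fun m => X (k, m)) (b⁻¹ p.2)) (a⁻¹ p.1) :=
        congrFun (ha fun k => L₂ (fun m => X (k, m)) (b⁻¹ p.2)) p.1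
    _ = Tmap L₁ L₂ X ((permProdHom (Fin n) (Fin d) (a, b))⁻¹ p) := by
        rw [Tmap_apply, permProdHom_inv_apply]

end Aux2

section Aux3

variable {n d : ℕ} {H₁ : Subgroup (Equiv.Perm (Fin n))} {H₂ : Subgroup (Equiv.Perm (Fin d))}

/-- The endomorphism of `ℝ^d` with coefficients `c`: `(matL c x) l = ∑ j, c j l * x j`. -/
noncomputable def matL (c : Fin d → Fin d → ℝ) : (Fin d → ℝ) →ₗ[ℝ] (Fin d → ℝ) where
  toFun x l := ∑ j, c j l * x j
  map_add' x y := by funext l; simp [mul_add, Finset.sum_add_distrib]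
  map_smul' r x := by
    funext l
    simp only [Pi.smul_apply, smul_eq_mul, RingHom.id_apply]
    rw [Finset.mul_sum]
    exact Finset.sum_congr rfl fun j _ => by ring

theorem matL_apply (c : Fin d → Fin d → ℝ) (x : Fin d → ℝ) (l : Fin d) :
    matL c x l = ∑ j, c j l * x j := rfl

theorem matL_mem {ι₁ : Type*} (B₁ : Module.Basis ι₁ ℝ (equivSubmodule H₁))
    {T : (Fin n × Fin d → ℝ) →ₗ[ℝ] (Fin n × Fin d → ℝ)}
    (hT : T ∈ equivSubmodule (Subgroup.map (permProdHom (Fin n) (Fin d)) (H₁.prod H₂)))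
    (hS : ∀ j l : Fin d, Sop T j l ∈ equivSubmodule H₁) (a : ι₁) :
    matL (fun j l => B₁.repr ⟨Sop T j l, hS j l⟩ a) ∈ equivSubmodule H₂ := by
  rw [mem_equivSubmodule]
  intro h hh x
  funext l
  show (∑ j, B₁.repr ⟨Sop T j l, hS j l⟩ a * x (h⁻¹ j))
      = ∑ j, B₁.repr ⟨Sop T j (h⁻¹ l), hS j (h⁻¹ l)⟩ a * x j
  rw [← Equiv.sum_comp h (fun j => B₁.repr ⟨Sop T j l, hS j l⟩ a * x (h⁻¹ j))]
  refine Finset.sum_congr rfl fun j _ => ?_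
  rw [show h⁻¹ (h j) = j from Equiv.symm_apply_apply h j]
  have hsub : (⟨Sop T (h j) l, hS (h j) l⟩ : equivSubmodule H₁)
      = ⟨Sop T j (h⁻¹ l), hS j (h⁻¹ l)⟩ := Subtype.ext (Sop_perm hT hh j l)
  rw [hsub]

/-- `Tmap L₁` as a linear map in the second argument. -/
noncomputable def TmapR (L₁ : (Fin n → ℝ) →ₗ[ℝ] (Fin n → ℝ)) :
    ((Fin d → ℝ) →ₗ[ℝ] (Fin d → ℝ)) →ₗ[ℝ]
      ((Fin n × Fin d → ℝ) →ₗ[ℝ] (Fin n × Fin d → ℝ)) where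
  toFun L₂ := Tmap L₁ L₂
  map_add' M N := by
    refine LinearMap.ext fun X => funext fun p => ?_
    show Tmap L₁ (M + N) X p = (Tmap L₁ M + Tmap L₁ N) X p
    rw [Tmap_apply]
    have h : (fun k => (M + N) (fun m => X (k, m)) p.2)
        = (fun k => M (fun m => X (k, m)) p.2) + fun k => N (fun m => X (k, m)) p.2 := by
      funext k; simp
    rw [h, map_add]
    rfl
  map_smul' r M := by
    refine LinearMap.ext fun X => funext fun p => ?_
    show Tmap L₁ (r • M) X p = (r • Tmap L₁ M) X p
    rw [Tmap_apply]
    have h : (fun k => (r • M) (fun m => X (k, m)) p.2)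
        = r • fun k => M (fun m => X (k, m)) p.2 := by
      funext k; simp
    rw [h, map_smul]
    rfl

theorem Tmap_mem_span {ι₁ ι₂ : Type*} (B₁ : Module.Basis ι₁ ℝ (equivSubmodule H₁))
    (B₂ : Module.Basis ι₂ ℝ (equivSubmodule H₂)) (a : ι₁)
    {L₂ : (Fin d → ℝ) →ₗ[ℝ] (Fin d → ℝ)} (h : L₂ ∈ equivSubmodule H₂) :
    Tmap (B₁ a).val L₂ ∈
      Submodule.span ℝ (Set.range fun p : ι₁ × ι₂ => Tmap (B₁ p.1).val (B₂ p.2).val) := by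
  have h1 : (⟨L₂, h⟩ : equivSubmodule H₂)
      = ∑ b ∈ (B₂.repr ⟨L₂, h⟩).support, B₂.repr ⟨L₂, h⟩ b • B₂ b := by
    conv_lhs => rw [← B₂.linearCombination_repr ⟨L₂, h⟩]
    rw [Finsupp.linearCombination_apply, Finsupp.sum]
  have h2 : L₂ = ∑ b ∈ (B₂.repr ⟨L₂, h⟩).support, B₂.repr ⟨L₂, h⟩ b • (B₂ b).val := by
    have := congrArg Subtype.val h1
    simpa using this
  rw [show Tmap (B₁ a).val L₂ = TmapR (B₁ a).val L₂ from rfl, h2, map_sum]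
  refine Submodule.sum_mem _ fun b _ => ?_
  rw [map_smul]
  exact Submodule.smul_mem _ _ (Submodule.subset_span ⟨(a, b), rfl⟩)

theorem Tmap_pure (L₁ : (Fin n → ℝ) →ₗ[ℝ] (Fin n → ℝ)) (L₂ : (Fin d → ℝ) →ₗ[ℝ] (Fin d → ℝ))
    (v : Fin n → ℝ) (w : Fin d → ℝ) (i : Fin n) (l : Fin d) :
    Tmap L₁ L₂ (fun q => v q.1 * w q.2) (i, l) = L₂ w l * L₁ v i := by
  rw [Tmap_apply]
  have h1 : (fun k => L₂ (fun m => (fun q : Fin n × Fin d => v q.1 * w q.2) (k, m)) l)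
      = fun k => L₂ w l * v k := by
    funext k
    show L₂ (fun m => v k * w m) l = _
    rw [show (fun m => v k * w m) = v k • w from rfl, map_smul]
    simp [mul_comm]
  rw [h1, show (fun k => L₂ w l * v k) = L₂ w l • v from rfl, map_smul]
  simp

end Aux3

set_option synthInstance.maxHeartbeats 400000 in
theorem coeff_eq_zero {α : Type*} [Fintype α] [DecidableEq α] {G : Subgroup (Equiv.Perm α)}
    {ι : Type*} [DecidableEq ι] (B : Module.Basis ι ℝ (equivSubmodule G)) (s : Finset ι) (c : ι → ℝ)
    (h : ∑ a ∈ s, c a • ((B a).val : (α → ℝ) →ₗ[ℝ] (α → ℝ)) = 0) : ∀ a ∈ s, c a = 0 := by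
  have hz : (∑ a ∈ s, c a • B a : equivSubmodule G) = 0 := by
    apply Subtype.val_injective
    calc ((∑ a ∈ s, c a • B a : equivSubmodule G) : (α → ℝ) →ₗ[ℝ] (α → ℝ))
        = ∑ a ∈ s, c a • ((B a).val : (α → ℝ) →ₗ[ℝ] (α → ℝ)) := by push_cast; rfl
      _ = 0 := h
  intro a ha
  have h1 : B.repr (∑ a' ∈ s, c a' • B a') = 0 := by rw [hz]; exact map_zero _
  rw [map_sum] at h1
  simp only [map_smul, Module.Basis.repr_self] at h1
  have h2 := DFunLike.congr_fun h1 a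
  simp only [Finsupp.finset_sum_apply, Finsupp.smul_apply, Finsupp.single_apply, smul_eq_mul,
    mul_ite, mul_one, mul_zero, Finsupp.coe_zero, Pi.zero_apply] at h2
  rw [Finset.sum_ite_eq' s a c, if_pos ha] at h2
  exact h2

/-- **Kronecker products of bases of commutants form a basis of the commutant of the product.**
If `{L¹ᵢ}` is a basis of the `H₁`-equivariant endomorphisms of `ℝⁿ` and `{L²ⱼ}` a basis of the
`H₂`-equivariant endomorphisms of `ℝ^d`, then the maps `T_{i,j}(X) = L¹ᵢ X (L²ⱼ)ᵀ` form a basis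
(linearly independent and spanning) of the space of `H₁ × H₂`-equivariant linear maps
`ℝ^{n×d} → ℝ^{n×d}`. -/
theorem tmap_basis_of_product_commutant {n d : ℕ}
    (H₁ : Subgroup (Equiv.Perm (Fin n))) (H₂ : Subgroup (Equiv.Perm (Fin d)))
    {ι₁ ι₂ : Type*} (B₁ : Module.Basis ι₁ ℝ (equivSubmodule H₁)) (B₂ : Module.Basis ι₂ ℝ (equivSubmodule H₂)) :
    LinearIndependent ℝ (fun p : ι₁ × ι₂ => Tmap (B₁ p.1).val (B₂ p.2).val) ∧
      Submodule.span ℝ (Set.range fun p : ι₁ × ι₂ => Tmap (B₁ p.1).val (B₂ p.2).val) =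
        equivSubmodule (Subgroup.map (permProdHom (Fin n) (Fin d)) (H₁.prod H₂)) := by
  classical
  constructor
  · -- Linear independence
    rw [linearIndependent_iff']
    intro s g hsum p hp
    set s₁ := s.image Prod.fst with hs₁
    set s₂ := s.image Prod.snd with hs₂
    set g' : ι₁ × ι₂ → ℝ := fun q => if q ∈ s then g q else 0 with hg'
    have hsub : s ⊆ s₁ ×ˢ s₂ := by
      intro q hq
      exact Finset.mem_product.2 ⟨Finset.mem_image_of_mem _ hq, Finset.mem_image_of_mem _ hq⟩
    have hsum' : ∑ q ∈ s₁ ×ˢ s₂, g' q • Tmap (B₁ q.1).val (B₂ q.2).val = 0 := by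
      rw [← Finset.sum_subset hsub (fun q _ hq => by simp [hg', hq])]
      rw [← hsum]
      exact Finset.sum_congr rfl fun q hq => by simp [hg', hq]
    have hz : ∀ a ∈ s₁, ∀ b ∈ s₂, g' (a, b) = 0 := by
      intro a ha
      have hrow : ∀ (w : Fin d → ℝ) (l : Fin d),
          ∑ b ∈ s₂, g' (a, b) * (B₂ b).val w l = 0 := by
        intro w l
        refine coeff_eq_zero B₁ s₁ (fun a => ∑ b ∈ s₂, g' (a, b) * (B₂ b).val w l) ?_ a ha
        refine LinearMap.ext fun v => funext fun i => ?_
        have h0 : (∑ q ∈ s₁ ×ˢ s₂, g' q • Tmap (B₁ q.1).val (B₂ q.2).val)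
            (fun q => v q.1 * w q.2) (i, l) = 0 := by rw [hsum']; rfl
        rw [LinearMap.sum_apply, Finset.sum_apply] at h0
        simp only [LinearMap.smul_apply, Pi.smul_apply, smul_eq_mul, Tmap_pure] at h0
        rw [Finset.sum_product] at h0
        rw [LinearMap.sum_apply, Finset.sum_apply]
        simp only [LinearMap.smul_apply, Pi.smul_apply, smul_eq_mul,
          LinearMap.zero_apply, Pi.zero_apply]
        rw [← h0]
        refine Finset.sum_congr rfl fun x _ => ?_
        rw [Finset.sum_mul]
        exact Finset.sum_congr rfl fun y _ => by ring
      refine coeff_eq_zero B₂ s₂ (fun b => g' (a, b)) ?_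
      refine LinearMap.ext fun w => funext fun l => ?_
      rw [LinearMap.sum_apply, Finset.sum_apply]
      simp only [LinearMap.smul_apply, Pi.smul_apply, smul_eq_mul,
        LinearMap.zero_apply, Pi.zero_apply]
      exact hrow w l
    have h1 : p.1 ∈ s₁ := Finset.mem_image_of_mem _ hp
    have h2 : p.2 ∈ s₂ := Finset.mem_image_of_mem _ hp
    have := hz p.1 h1 p.2 h2
    simpa [hg', hp] using this
  · -- Span
    apply le_antisymm
    · rw [Submodule.span_le]
      rintro _ ⟨q, rfl⟩
      exact Tmap_mem (B₁ q.1).2 (B₂ q.2).2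
    · intro T hT
      have hS : ∀ j l : Fin d, Sop T j l ∈ equivSubmodule H₁ := fun j l => Sop_mem hT j l
      set s : Finset ι₁ := Finset.univ.biUnion
        (fun jl : Fin d × Fin d => (B₁.repr ⟨Sop T jl.1 jl.2, hS jl.1 jl.2⟩).support) with hs
      have hrepr : ∀ j l : Fin d, Sop T j l
          = ∑ a ∈ s, B₁.repr ⟨Sop T j l, hS j l⟩ a • ((B₁ a).val : (Fin n → ℝ) →ₗ[ℝ] (Fin n → ℝ)) := by
        intro j l
        have hsub : (B₁.repr ⟨Sop T j l, hS j l⟩).support ⊆ s := by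
          rw [hs]
          exact fun a ha => Finset.mem_biUnion.2 ⟨(j, l), Finset.mem_univ _, ha⟩
        have h1 : (⟨Sop T j l, hS j l⟩ : equivSubmodule H₁)
            = ∑ a ∈ s, B₁.repr ⟨Sop T j l, hS j l⟩ a • B₁ a := by
          conv_lhs => rw [← B₁.linearCombination_repr ⟨Sop T j l, hS j l⟩]
          rw [Finsupp.linearCombination_apply]
          exact Finsupp.sum_of_support_subset _ hsub _ (fun a _ => zero_smul _ _)
        have := congrArg Subtype.val h1
        simpa using this
      have hT_eq : T = ∑ a ∈ s,
          Tmap (B₁ a).val (matL fun j l => B₁.repr ⟨Sop T j l, hS j l⟩ a) := by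
        refine LinearMap.ext fun X => funext fun p => ?_
        obtain ⟨i, l⟩ := p
        rw [reconstruction T X i l, LinearMap.sum_apply, Finset.sum_apply]
        have hterm : ∀ a : ι₁,
            Tmap (B₁ a).val (matL fun j l' => B₁.repr ⟨Sop T j l', hS j l'⟩ a) X (i, l)
            = ∑ j, B₁.repr ⟨Sop T j l, hS j l⟩ a * (B₁ a).val (fun k => X (k, j)) i := by
          intro a
          rw [Tmap_apply]
          have h1 : (fun k => matL (fun j l' => B₁.repr ⟨Sop T j l', hS j l'⟩ a)
                (fun m => X (k, m)) l)
              = ∑ j, B₁.repr ⟨Sop T j l, hS j l⟩ a • fun k => X (k, j) := by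
            funext k
            rw [Finset.sum_apply]
            simp [matL_apply]
          rw [h1, map_sum, Finset.sum_apply]
          simp
        calc ∑ j, Sop T j l (fun k => X (k, j)) i
            = ∑ j, ∑ a ∈ s, B₁.repr ⟨Sop T j l, hS j l⟩ a * (B₁ a).val (fun k => X (k, j)) i := by
              refine Finset.sum_congr rfl fun j _ => ?_
              conv_lhs => rw [hrepr j l]
              rw [LinearMap.sum_apply, Finset.sum_apply]
              simp
          _ = ∑ a ∈ s, ∑ j, B₁.repr ⟨Sop T j l, hS j l⟩ a * (B₁ a).val (fun k => X (k, j)) i :=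
              Finset.sum_comm
          _ = ∑ a ∈ s, Tmap (B₁ a).val
                (matL fun j l' => B₁.repr ⟨Sop T j l', hS j l'⟩ a) X (i, l) :=
              Finset.sum_congr rfl fun a _ => (hterm a).symm
      rw [hT_eq]
      exact Submodule.sum_mem _ fun a _ => Tmap_mem_span B₁ B₂ a (matL_mem B₁ hT hS a)
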